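/- Let q be an odd prime power, m ≥ 1, and n = q^m + 1. An integer a with 0 ≤ a ≤ q^m is the smallest element of its q-cyclotomic coset modulo n if and only if a ≤ n/2 and a cannot be written as l·q^{m−i} + h for any integers i, l, h with 1 ≤ i < m, 1 ≤ l ≤ (q^i − 1)/2, and −l(q^{m−i} − 1)/(q^i + 1) < h < l(q^{m−i} + 1)/(q^i − 1). -/
import Mathlib

private lemma natMod_eq (N x : ℕ) (L t : ℤ) (hx : (x:ℤ) = t + N * L)
    (h0 : 0 ≤ t) (h1 : t < N) : ((x % N : ℕ) : ℤ) = t := by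
  have h2 : ((x % N : ℕ) : ℤ) = (x : ℤ) % N := by push_cast; ring
  rw [h2, hx, Int.add_mul_emod_self_left, Int.emod_eq_of_lt h0 h1]

private lemma exists_decomp (q n m a i : ℕ) (L t : ℤ)
    (hq3 : 3 ≤ q) (hqodd : Odd q) (hn : n = q ^ m + 1)
    (hi1 : 1 ≤ i) (him : i < m) (ha1 : 1 ≤ a) (h2a : a * 2 ≤ n)
    (hEq : (a:ℤ) * q ^ i = n * L + t) (ht1 : -(a:ℤ) < t) (ht2 : t < a) :
    ∃ (i' l : ℕ) (h : ℤ), 1 ≤ i' ∧ i' < m ∧ 1 ≤ l ∧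
      l ≤ (q ^ i' - 1) / 2 ∧
      (-(l : ℤ) * ((q : ℤ) ^ (m - i') - 1) < h * ((q : ℤ) ^ i' + 1)) ∧
      (h * ((q : ℤ) ^ i' - 1) < (l : ℤ) * ((q : ℤ) ^ (m - i') + 1)) ∧
      (a : ℤ) = (l : ℤ) * (q : ℤ) ^ (m - i') + h := by
  have hq0 : (0:ℤ) < q := by exact_mod_cast (by omega : 0 < q)
  have hqi3 : (3:ℤ) ≤ (q:ℤ) ^ i := by
    calc (3:ℤ) ≤ q := by exact_mod_cast hq3
    _ = (q:ℤ)^1 := (pow_one _).symm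
    _ ≤ (q:ℤ)^i := pow_le_pow_right₀ (by linarith) hi1
  have hn0 : (0:ℤ) < n := by exact_mod_cast (by omega : 0 < n)
  have ha1' : (1:ℤ) ≤ a := by exact_mod_cast ha1
  have h2a' : (a:ℤ) * 2 ≤ n := by exact_mod_cast h2a
  -- L ≥ 1
  have hL1 : 1 ≤ L := by
    have h1 : 0 < n * L := by nlinarith
    nlinarith
  -- L upper bound
  have hL2 : 2 * L ≤ (q:ℤ)^i - 1 := by
    have h1 : n * (2 * L) < n * ((q:ℤ)^i + 1) := by nlinarith
    have h2 : 2 * L < (q:ℤ)^i + 1 := lt_of_mul_lt_mul_left h1 (le_of_lt hn0)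
    have h3 : 2 * L ≤ (q:ℤ)^i := by omega
    have hodd : Odd ((q:ℤ)^i) := by
      exact_mod_cast (hqodd.pow : Odd (q ^ i))
    rcases hodd with ⟨c, hc⟩
    omega
  set l : ℕ := L.toNat with hl
  have hlL : (l:ℤ) = L := Int.toNat_of_nonneg (by omega)
  have hpow : (q:ℤ)^(m-i) * (q:ℤ)^i = (q:ℤ)^m := by
    rw [← pow_add, Nat.sub_add_cancel him.le]
  have hqm : (q:ℤ)^m = (n:ℤ) - 1 := by
    have : (n:ℤ) = (q:ℤ)^m + 1 := by rw [hn]; push_cast; ring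
    omega
  refine ⟨i, l, (a:ℤ) - L * (q:ℤ)^(m-i), hi1, him, ?_, ?_, ?_, ?_, by rw [hlL]; ring⟩
  · omega
  · rw [Nat.le_div_iff_mul_le (by norm_num)]
    have : ((l * 2 : ℕ) : ℤ) ≤ ((q ^ i - 1 : ℕ) : ℤ) := by
      push_cast [Nat.cast_sub (by nlinarith : 1 ≤ q ^ i)]
      rw [hlL]; linarith
    exact_mod_cast this
  · -- lower inequality  ⟺  -a < t
    rw [hlL]
    have hkey : ((a:ℤ) - L * (q:ℤ)^(m-i)) * (q:ℤ)^i - L = t := by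
      have : (a:ℤ) * q ^ i - L * ((q:ℤ)^(m-i) * (q:ℤ)^i) - L = t := by
        rw [hpow, hqm]; linarith [hEq]
      linarith [this, hpow]
    nlinarith [hkey, hpow]
  · rw [hlL]
    have hkey : ((a:ℤ) - L * (q:ℤ)^(m-i)) * (q:ℤ)^i - L = t := by
      have : (a:ℤ) * q ^ i - L * ((q:ℤ)^(m-i) * (q:ℤ)^i) - L = t := by
        rw [hpow, hqm]; linarith [hEq]
      linarith [this, hpow]
    nlinarith [hkey, hpow]

theorem cosetLeader_iff_odd_q (p e m : ℕ) (hp : p.Prime) (hpodd : Odd p)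
    (he : 1 ≤ e) (hm : 1 ≤ m) (q : ℕ) (hq : q = p ^ e)
    (n : ℕ) (hn : n = q ^ m + 1) (a : ℕ) (ha : a ≤ q ^ m) :
    (∀ j : ℕ, a ≤ (a * q ^ j) % n) ↔
      (a ≤ n / 2 ∧
        ¬ ∃ (i l : ℕ) (h : ℤ), 1 ≤ i ∧ i < m ∧ 1 ≤ l ∧
          l ≤ (q ^ i - 1) / 2 ∧
          (-(l : ℤ) * ((q : ℤ) ^ (m - i) - 1) < h * ((q : ℤ) ^ i + 1)) ∧
          (h * ((q : ℤ) ^ i - 1) < (l : ℤ) * ((q : ℤ) ^ (m - i) + 1)) ∧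
          (a : ℤ) = (l : ℤ) * (q : ℤ) ^ (m - i) + h) := by
  have hq3 : 3 ≤ q := by
    have hp2 := hp.two_le
    have hp3 : 3 ≤ p := by
      rcases Nat.lt_or_ge p 3 with h | h
      · interval_cases p
        · exact absurd hpodd (by decide)
      · exact h
    calc 3 ≤ p := hp3
    _ = p ^ 1 := (pow_one _).symm
    _ ≤ p ^ e := Nat.pow_le_pow_right (by omega) he
    _ = q := hq.symm
  have hqodd : Odd q := hq ▸ hpodd.pow
  have hqm3 : 3 ≤ q ^ m := by
    calc 3 ≤ q := hq3
    _ = q ^ 1 := (pow_one _).symm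
    _ ≤ q ^ m := Nat.pow_le_pow_right (by omega) hm
  have hn4 : 4 ≤ n := by omega
  have han : a < n := by omega
  have hqmZ : (q:ℤ) ^ m = (n:ℤ) - 1 := by
    have : (n:ℤ) = (q:ℤ)^m + 1 := by rw [hn]; push_cast; ring
    omega
  constructor
  · intro hlead
    have h2a : a * 2 ≤ n := by
      rcases Nat.eq_zero_or_pos a with h0 | h0
      · omega
      · have hm' := hlead m
        have hres : (((a * q ^ m) % n : ℕ) : ℤ) = (n:ℤ) - a := by
          apply natMod_eq n _ ((a:ℤ) - 1)
          · push_cast; rw [hqmZ]; ring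
          · have : (a:ℤ) < n := by exact_mod_cast han
            linarith
          · have : (1:ℤ) ≤ a := by exact_mod_cast h0
            linarith
        have hc : (a:ℤ) ≤ (((a * q ^ m) % n : ℕ) : ℤ) := by exact_mod_cast hm'
        rw [hres] at hc
        have : (a:ℤ) * 2 ≤ n := by linarith
        exact_mod_cast this
    refine ⟨(Nat.le_div_iff_mul_le (by norm_num)).mpr h2a, ?_⟩
    rintro ⟨i, l, hh, hi1, him, hl1, hl2, hlb, hub, heqa⟩
    have hpow : (q:ℤ)^(m-i) * (q:ℤ)^i = (q:ℤ)^m := by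
      rw [← pow_add, Nat.sub_add_cancel him.le]
    set t : ℤ := hh * (q:ℤ)^i - l with hts
    have hEq : (a:ℤ) * q ^ i = t + n * l := by
      have e1 : (a:ℤ) * q^i = l * ((q:ℤ)^(m-i) * (q:ℤ)^i) + hh * (q:ℤ)^i := by
        rw [heqa]; ring
      rw [hpow, hqmZ] at e1
      rw [hts]; linarith
    have ht2 : t < a := by linarith [hub, heqa, hts]
    have ht1 : -(a:ℤ) < t := by linarith [hlb, heqa, hts]
    have htn : t < (n:ℤ) := by
      have : (a:ℤ) < n := by exact_mod_cast han
      linarith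
    rcases le_or_gt 0 t with hc | hc
    · have hres := natMod_eq n (a * q ^ i) l t (by push_cast; linarith [hEq]) hc htn
      have := hlead i
      have : (a:ℤ) ≤ (((a * q ^ i) % n : ℕ) : ℤ) := by exact_mod_cast this
      rw [hres] at this; linarith
    · have hEq2 : ((a * q ^ (m+i) : ℕ) : ℤ) = (-t) + n * (l * ((n:ℤ)-1) + t) := by
        push_cast
        have e2 : (q:ℤ)^(m+i) = (q:ℤ)^m * (q:ℤ)^i := by rw [pow_add]
        rw [e2, hqmZ]
        linear_combination ((n:ℤ)-1) * hEq
      have hres := natMod_eq n (a * q ^ (m+i)) (l * ((n:ℤ)-1) + t) (-t) hEq2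
        (by linarith) (by
          have hA : (a:ℤ) < n := by exact_mod_cast han
          linarith)
      have := hlead (m+i)
      have : (a:ℤ) ≤ (((a * q ^ (m+i)) % n : ℕ) : ℤ) := by exact_mod_cast this
      rw [hres] at this; linarith
  · rintro ⟨hhalf, hnex⟩ j
    have h2a : a * 2 ≤ n := (Nat.le_div_iff_mul_le (by norm_num)).mp hhalf
    by_contra hcon
    push_neg at hcon
    have ha1 : 1 ≤ a := by omega
    -- periodicity: q^(2m) ≡ 1 mod n
    have hper : q ^ (2*m) % n = 1 % n := by
      obtain ⟨k, hk⟩ : ∃ k, n = k + 2 := ⟨n - 2, by omega⟩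
      have h1 : q ^ (2*m) = n * (n-2) + 1 := by
        have e1 : q ^ (2*m) = (q ^ m) ^ 2 := by rw [← pow_mul, mul_comm]
        have e3 : q ^ m = k + 1 := by omega
        rw [e1, e3, hk]
        simp only [Nat.add_sub_cancel]
        ring
      rw [h1, Nat.mul_add_mod]
    have hqj : a * q ^ j % n = a * q ^ (j % (2*m)) % n := by
      have hper' : Nat.ModEq n (q ^ (2*m)) 1 := hper
      have := ((hper'.pow (j / (2*m))).mul_right (q ^ (j % (2*m)))).mul_left a
      calc a * q ^ j % n
          = a * ((q ^ (2*m)) ^ (j / (2*m)) * q ^ (j % (2*m))) % n := by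
            rw [← pow_mul, ← pow_add, Nat.div_add_mod]
        _ = a * (1 ^ (j / (2*m)) * q ^ (j % (2*m))) % n := this
        _ = a * q ^ (j % (2*m)) % n := by rw [one_pow, one_mul]
    rw [hqj] at hcon
    set j' := j % (2*m) with hj'def
    have hj'lt : j' < 2*m := Nat.mod_lt _ (by omega)
    set r : ℕ := a * q ^ j' % n with hrdef
    rcases lt_trichotomy j' m with hlt | heq | hgt
    · rcases Nat.eq_zero_or_pos j' with h0 | hpos
      · have hra : r = a := by
          rw [hrdef, h0, pow_zero, mul_one]
          exact Nat.mod_eq_of_lt han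
        omega
      · -- 1 ≤ j' < m : build decomposition with i = j', t = r
        set L : ℕ := a * q ^ j' / n with hLdef
        have hdiv : n * L + r = a * q ^ j' := Nat.div_add_mod _ _
        have hEq : (a:ℤ) * q ^ j' = (n:ℤ) * L + r := by exact_mod_cast hdiv.symm
        refine hnex (exists_decomp q n m a j' (L:ℤ) (r:ℤ) hq3 hqodd hn hpos hlt ha1 h2a hEq ?_ ?_)
        · have : (0:ℤ) ≤ r := by positivity
          have hA : (1:ℤ) ≤ a := by exact_mod_cast ha1
          linarith
        · exact_mod_cast hcon
    · -- j' = m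
      have hres : ((r:ℕ) : ℤ) = (n:ℤ) - a := by
        rw [hrdef, heq]
        apply natMod_eq n _ ((a:ℤ) - 1)
        · push_cast; rw [hqmZ]; ring
        · have : (a:ℤ) < n := by exact_mod_cast han
          linarith
        · have : (1:ℤ) ≤ a := by exact_mod_cast ha1
          linarith
      have : (r:ℤ) < a := by exact_mod_cast hcon
      have h2a' : (a:ℤ) * 2 ≤ n := by exact_mod_cast h2a
      rw [hres] at this
      linarith
    · -- m < j' < 2m : i = j' - m, t = -r
      set i : ℕ := j' - m with hidef
      have hi1 : 1 ≤ i := by omega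
      have him : i < m := by omega
      set k : ℕ := a * q ^ j' / n with hkdef
      have hdiv : n * k + r = a * q ^ j' := Nat.div_add_mod _ _
      have hdiv' : (n:ℤ) * k + r = (a:ℤ) * q ^ j' := by exact_mod_cast hdiv
      have e1 : ((q:ℤ)) ^ j' = (q:ℤ) ^ m * (q:ℤ) ^ i := by
        rw [← pow_add]
        congr 1
        omega
      rw [e1, hqmZ] at hdiv'
      have hEq : (a:ℤ) * q ^ i = (n:ℤ) * ((a:ℤ) * q ^ i - k) + (-(r:ℤ)) := by
        linear_combination hdiv'
      refine hnex (exists_decomp q n m a i ((a:ℤ) * q ^ i - k) (-(r:ℤ)) hq3 hqodd hn hi1 him ha1 h2a hEq ?_ ?_)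
      · have : (r:ℤ) < a := by exact_mod_cast hcon
        linarith
      · have : (0:ℤ) ≤ r := by positivity
        have hA : (1:ℤ) ≤ a := by exact_mod_cast ha1
        linarith
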